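/- Let N ≥ 2, K ≥ 1, α > 0, and let q : (Fin K)^N → ℝ be nonnegative weights with Σ_k q(k) = 1. Let |G̃⟩ ∈ ⊗_{i=1}^N ℂ^{2K} and the local isometries Φᵢ : ℂ^{2K} → ℂ^{2K}⊗ℂ² be as follows: |G̃⟩ = Σ_k √(q(k))·(1/√2)(⊗_i e_{2k_i} + ⊗_i e_{2k_i+1}), Φᵢ(e_{2k}) = e_{2k}⊗f₀, Φᵢ(e_{2k+1}) = e_{2k}⊗f₁. Define the block-diagonal experimental observable Ã_{10} on ℂ^{2K} by Ã_{10} = Σ_{k=0}^{K−1} [ ((N−1)α/√(1+(N−1)²α²))·(e_{2k}e_{2k}^* − e_{2k+1}e_{2k+1}^*) + (1/√(1+(N−1)²α²))·(e_{2k}e_{2k+1}^* + e_{2k+1}e_{2k}^*) ]. Then, under the canonical reordering isomorphism ⊗_i(ℂ^{2K}⊗ℂ²) ≅ (⊗_i ℂ^{2K}) ⊗ (⊗_i ℂ²), one has (⊗_{i=1}^N Φᵢ)((Ã_{10}⊗Id⊗⋯⊗Id)|G̃⟩) = |junk⟩ ⊗ ((A*_{10}⊗I₂⊗⋯⊗I₂)|GHZ_N⟩),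 where |junk⟩ = Σ_k √(q(k)) ⊗_i e_{2k_i}, |GHZ_N⟩ = (1/√2)(f₀^{⊗N}+f₁^{⊗N}), and A*_{10} = ((N−1)α·σz + σx)/√(1+(N−1)²α²) acting on ℂ² with basis f₀, f₁. -/

import Mathlib

open Matrix BigOperators Finset

noncomputable section

/-- Tensor product of `N` square matrices on `ℂ^{2K}`, indexed by `Fin N → Fin (2K)`. -/
def tensorBig (N K : ℕ) (M : Fin N → Matrix (Fin (2 * K)) (Fin (2 * K)) ℂ) :
    Matrix (Fin N → Fin (2 * K)) (Fin N → Fin (2 * K)) ℂ :=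
  Matrix.of fun f g => ∏ i, M i (f i) (g i)

/-- Tensor product of `N` 2×2 complex matrices, indexed by bit strings `Fin N → Fin 2`. -/
def tensorN (N : ℕ) (M : Fin N → Matrix (Fin 2) (Fin 2) ℂ) :
    Matrix (Fin N → Fin 2) (Fin N → Fin 2) ℂ :=
  Matrix.of fun f g => ∏ i, M i (f i) (g i)

def sigmax : Matrix (Fin 2) (Fin 2) ℂ := !![0, 1; 1, 0]
def sigmaz : Matrix (Fin 2) (Fin 2) ℂ := !![1, 0; 0, -1]

/-- The even basis index `2k : Fin (2K)`. -/
def ev {K : ℕ} (k : Fin K) : Fin (2 * K) := ⟨2 * (k : ℕ), by have := k.isLt; omega⟩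

/-- The odd basis index `2k+1 : Fin (2K)`. -/
def od {K : ℕ} (k : Fin K) : Fin (2 * K) := ⟨2 * (k : ℕ) + 1, by have := k.isLt; omega⟩

/-- The matrix entries of the SWAP-type local isometry
`Φᵢ : ℂ^{2K} → ℂ^{2K}⊗ℂ²`, `Φᵢ(e_{2k}) = e_{2k}⊗f₀`, `Φᵢ(e_{2k+1}) = e_{2k}⊗f₁`. -/
def isoEntry (K : ℕ) : Fin (2 * K) × Fin 2 → Fin (2 * K) → ℂ := fun p m =>
  if (p.1 : ℕ) = 2 * ((m : ℕ) / 2) ∧ (p.2 : ℕ) = (m : ℕ) % 2 then 1 else 0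

/-- The experimental state `|G̃⟩ = Σ_k √(q k) (1/√2)(⊗ᵢ e_{2kᵢ} + ⊗ᵢ e_{2kᵢ+1})`. -/
def Gtilde (N K : ℕ) (q : (Fin N → Fin K) → ℝ) : (Fin N → Fin (2 * K)) → ℂ := fun f =>
  ∑ k : Fin N → Fin K, ((Real.sqrt (q k) : ℝ) : ℂ) * ((Real.sqrt 2 : ℝ) : ℂ)⁻¹ *
    ((∏ i, if (f i : ℕ) = 2 * (k i : ℕ) then (1 : ℂ) else 0)
      + ∏ i, if (f i : ℕ) = 2 * (k i : ℕ) + 1 then (1 : ℂ) else 0)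

/-- The junk state `|junk⟩ = Σ_k √(q k) ⊗ᵢ e_{2kᵢ}`. -/
def junk (N K : ℕ) (q : (Fin N → Fin K) → ℝ) : (Fin N → Fin (2 * K)) → ℂ := fun g =>
  ∑ k : Fin N → Fin K, ((Real.sqrt (q k) : ℝ) : ℂ) *
    ∏ i, if (g i : ℕ) = 2 * (k i : ℕ) then (1 : ℂ) else 0

/-- The `N`-qubit GHZ state. -/
def ghz (N : ℕ) : (Fin N → Fin 2) → ℂ := fun f =>
  if f = (fun _ => 0) then ((Real.sqrt 2 : ℝ) : ℂ)⁻¹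
  else if f = (fun _ => 1) then ((Real.sqrt 2 : ℝ) : ℂ)⁻¹ else 0

/-- The block-diagonal experimental observable `Ã₁₀ = ⊕_k A₁₀^{(k)}` on `ℂ^{2K}`. -/
def Atilde10 (N K : ℕ) (α : ℝ) : Matrix (Fin (2 * K)) (Fin (2 * K)) ℂ :=
  ∑ k : Fin K,
    ((((((N : ℝ) - 1) * α / Real.sqrt (1 + ((N : ℝ) - 1) ^ 2 * α ^ 2)) : ℝ) : ℂ) •
        (single (ev k) (ev k) (1 : ℂ) - single (od k) (od k) (1 : ℂ))
      + (((1 / Real.sqrt (1 + ((N : ℝ) - 1) ^ 2 * α ^ 2)) : ℝ) : ℂ) •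
        (single (ev k) (od k) (1 : ℂ) + single (od k) (ev k) (1 : ℂ)))

/-- The reference observable `A*₁₀ = ((N−1)α σz + σx)/√(1+(N−1)²α²)` on ℂ². -/
def Astar10 (N : ℕ) (α : ℝ) : Matrix (Fin 2) (Fin 2) ℂ :=
  ((Real.sqrt (1 + ((N : ℝ) - 1) ^ 2 * α ^ 2) : ℝ) : ℂ)⁻¹ •
    (((((N : ℝ) - 1) * α : ℝ) : ℂ) • sigmaz + sigmax)

-- auxiliary lemmas (to be inserted before the theorem)
def aC (N : ℕ) (α : ℝ) : ℂ :=
  ((((N : ℝ) - 1) * α / Real.sqrt (1 + ((N : ℝ) - 1) ^ 2 * α ^ 2) : ℝ) : ℂ)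

def cC (N : ℕ) (α : ℝ) : ℂ :=
  (((1 / Real.sqrt (1 + ((N : ℝ) - 1) ^ 2 * α ^ 2)) : ℝ) : ℂ)

lemma ind_ev {K : ℕ} (m : Fin (2 * K)) (k : Fin K) :
    (if (m : ℕ) = 2 * (k : ℕ) then (1 : ℂ) else 0) = if m = ev k then 1 else 0 := by
  simp [ev, Fin.ext_iff]

lemma ind_od {K : ℕ} (m : Fin (2 * K)) (k : Fin K) :
    (if (m : ℕ) = 2 * (k : ℕ) + 1 then (1 : ℂ) else 0) = if m = od k then 1 else 0 := by
  simp [od, Fin.ext_iff]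

set_option maxHeartbeats 1000000 in
lemma Atilde_ev (N K : ℕ) (α : ℝ) (m : Fin (2 * K)) (k : Fin K) :
    Atilde10 N K α m (ev k)
      = aC N α * (if m = ev k then 1 else 0) + cC N α * (if m = od k then 1 else 0) := by
  unfold Atilde10 aC cC
  rw [Matrix.sum_apply]
  rw [Finset.sum_eq_single k]
  · simp only [Matrix.add_apply, Matrix.smul_apply, Matrix.sub_apply, Matrix.single,
      Matrix.of_apply, smul_eq_mul, ev, od, Fin.ext_iff, Fin.val_mk]
    split_ifs <;> first | (exfalso; omega) | (exfalso; simp only [and_true, true_and, not_and] at *; omega) | ring1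
  · intro k' _ hk'
    have hk'' : (k' : ℕ) ≠ (k : ℕ) := by simpa [Fin.ext_iff] using hk'
    simp only [Matrix.add_apply, Matrix.smul_apply, Matrix.sub_apply, Matrix.single,
      Matrix.of_apply, smul_eq_mul, ev, od, Fin.ext_iff, Fin.val_mk]
    split_ifs <;> first | (exfalso; omega) | (exfalso; simp only [and_true, true_and, not_and] at *; omega) | ring1
  · intro h; exact absurd (Finset.mem_univ k) h

set_option maxHeartbeats 1000000 in
lemma Atilde_od (N K : ℕ) (α : ℝ) (m : Fin (2 * K)) (k : Fin K) :
    Atilde10 N K α m (od k)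
      = cC N α * (if m = ev k then 1 else 0) + (- aC N α) * (if m = od k then 1 else 0) := by
  unfold Atilde10 aC cC
  rw [Matrix.sum_apply]
  rw [Finset.sum_eq_single k]
  · simp only [Matrix.add_apply, Matrix.smul_apply, Matrix.sub_apply, Matrix.single,
      Matrix.of_apply, smul_eq_mul, ev, od, Fin.ext_iff, Fin.val_mk]
    split_ifs <;> first | (exfalso; omega) | (exfalso; simp only [and_true, true_and, not_and] at *; omega) | ring1
  · intro k' _ hk'
    have hk'' : (k' : ℕ) ≠ (k : ℕ) := by simpa [Fin.ext_iff] using hk'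
    simp only [Matrix.add_apply, Matrix.smul_apply, Matrix.sub_apply, Matrix.single,
      Matrix.of_apply, smul_eq_mul, ev, od, Fin.ext_iff, Fin.val_mk]
    split_ifs <;> first | (exfalso; omega) | (exfalso; simp only [and_true, true_and, not_and] at *; omega) | ring1
  · intro h; exact absurd (Finset.mem_univ k) h

lemma iso_ev {K : ℕ} (gg : Fin (2 * K)) (bb : Fin 2) (k : Fin K) :
    isoEntry K (gg, bb) (ev k)
      = (if gg = ev k then 1 else 0) * (if bb = 0 then 1 else 0) := by
  unfold isoEntry
  have h1 : (2 * (k : ℕ)) / 2 = (k : ℕ) := by omega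
  have h2 : (2 * (k : ℕ)) % 2 = 0 := by omega
  simp only [ev, Fin.val_mk, h1, h2]
  by_cases hg : (gg : ℕ) = 2 * (k : ℕ) <;> by_cases hb : (bb : ℕ) = 0 <;>
    simp [hg, hb, Fin.ext_iff]

lemma iso_od {K : ℕ} (gg : Fin (2 * K)) (bb : Fin 2) (k : Fin K) :
    isoEntry K (gg, bb) (od k)
      = (if gg = ev k then 1 else 0) * (if bb = 1 then 1 else 0) := by
  unfold isoEntry
  have h1 : (2 * (k : ℕ) + 1) / 2 = (k : ℕ) := by omega
  have h2 : (2 * (k : ℕ) + 1) % 2 = 1 := by omega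
  simp only [od, ev, Fin.val_mk, h1, h2]
  by_cases hg : (gg : ℕ) = 2 * (k : ℕ) <;> by_cases hb : (bb : ℕ) = 1 <;>
    simp [hg, hb, Fin.ext_iff]

lemma Astar_apply (N : ℕ) (α : ℝ) (x y : Fin 2) :
    Astar10 N α x y =
      if y = 0 then (if x = 0 then aC N α else cC N α)
      else (if x = 0 then cC N α else - aC N α) := by
  fin_cases x <;> fin_cases y <;>
    simp [Astar10, sigmax, sigmaz, aC, cC, div_eq_mul_inv] <;> push_cast <;> ring

lemma ghz_eq (N : ℕ) (hN : 1 ≤ N) (b' : Fin N → Fin 2) :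
    ghz N b' = ((Real.sqrt 2 : ℝ) : ℂ)⁻¹ *
      ((if b' = (fun _ => 0) then 1 else 0) + (if b' = (fun _ => 1) then 1 else 0)) := by
  unfold ghz
  by_cases h1 : b' = fun _ => 0
  · have h2 : ¬ b' = fun _ => 1 := by
      intro h2
      have := congrFun (h1.symm.trans h2) ⟨0, hN⟩
      exact absurd this (by decide)
    rw [if_pos h1, if_pos h1, if_neg h2]
    ring
  · rw [if_neg h1, if_neg h1]
    by_cases h2 : b' = fun _ => 1 <;> simp [h2]

lemma fin_two_cases (x : Fin 2) : x = 0 ∨ x = 1 := by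
  have h : (x : ℕ) = 0 ∨ (x : ℕ) = 1 := by have := x.isLt; omega
  rcases h with h | h
  · exact Or.inl (Fin.ext (by simpa using h))
  · exact Or.inr (Fin.ext (by simpa using h))

set_option maxHeartbeats 1000000 in
lemma main_lemma (N K : ℕ) (hN : 2 ≤ N) (α : ℝ) (q : (Fin N → Fin K) → ℝ)
    (i0 : Fin N) (g : Fin N → Fin (2 * K)) (b : Fin N → Fin 2) :
    (∑ f : Fin N → Fin (2 * K),
        (∏ i, isoEntry K (g i, b i) (f i)) *
          ((tensorBig N K (fun i => if i = i0
              then Atilde10 N K α else 1)).mulVec (Gtilde N K q)) f)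
      = junk N K q g *
          ((tensorN N (fun i => if i = i0
              then Astar10 N α else 1)).mulVec (ghz N)) b := by
  classical
  set M : Fin N → Matrix (Fin (2 * K)) (Fin (2 * K)) ℂ :=
    fun i => if i = i0 then Atilde10 N K α else 1 with hM
  set w : (Fin N → Fin K) → ℂ := fun k => ((Real.sqrt (q k) : ℝ) : ℂ) with hw
  set s2 : ℂ := ((Real.sqrt 2 : ℝ) : ℂ)⁻¹ with hs2
  -- the factorization lemma
  have key : ∀ v : Fin N → Fin (2 * K) → ℂ,
      (∑ f : Fin N → Fin (2 * K), (∏ i, isoEntry K (g i, b i) (f i)) *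
        ∑ f' : Fin N → Fin (2 * K), (∏ i, M i (f i) (f' i)) * ∏ i, v i (f' i))
      = ∏ i, ∑ m, isoEntry K (g i, b i) m * ∑ m', M i m m' * v i m' := by
    intro v
    have h1 : ∀ f : Fin N → Fin (2 * K),
        (∑ f' : Fin N → Fin (2 * K), (∏ i, M i (f i) (f' i)) * ∏ i, v i (f' i))
          = ∏ i, ∑ m', M i (f i) m' * v i m' := by
      intro f
      calc (∑ f' : Fin N → Fin (2 * K), (∏ i, M i (f i) (f' i)) * ∏ i, v i (f' i))
          = ∑ f' : Fin N → Fin (2 * K), ∏ i, (M i (f i) (f' i) * v i (f' i)) :=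
            Finset.sum_congr rfl fun f' _ => (Finset.prod_mul_distrib).symm
        _ = ∏ i, ∑ m', M i (f i) m' * v i m' :=
            (Fintype.prod_sum (κ := fun _ : Fin N => Fin (2 * K))
              (fun i m' => M i (f i) m' * v i m')).symm
    simp only [h1]
    calc (∑ f : Fin N → Fin (2 * K),
            (∏ i, isoEntry K (g i, b i) (f i)) * ∏ i, ∑ m', M i (f i) m' * v i m')
        = ∑ f : Fin N → Fin (2 * K),
            ∏ i, (isoEntry K (g i, b i) (f i) * ∑ m', M i (f i) m' * v i m') :=
          Finset.sum_congr rfl fun f _ => (Finset.prod_mul_distrib).symm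
      _ = ∏ i, ∑ m, isoEntry K (g i, b i) m * ∑ m', M i m m' * v i m' :=
          (Fintype.prod_sum (κ := fun _ : Fin N => Fin (2 * K))
            (fun i m => isoEntry K (g i, b i) m * ∑ m', M i m m' * v i m')).symm
  have hsum_ind : ∀ (u : Fin (2 * K) → ℂ) (x : Fin (2 * K)),
      (∑ m, u m * (if m = x then (1 : ℂ) else 0)) = u x := by
    intro u x; simp
  have hv_ev : ∀ (i : Fin N) (m : Fin (2 * K)) (κ : Fin K),
      (∑ m', M i m m' * (if (m' : ℕ) = 2 * (κ : ℕ) then (1 : ℂ) else 0)) = M i m (ev κ) := by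
    intro i m κ
    rw [Finset.sum_eq_single (ev κ)]
    · simp [ev]
    · intro m' _ hm'
      have h : ¬ (m' : ℕ) = 2 * (κ : ℕ) := by simpa [Fin.ext_iff, ev] using hm'
      simp [h]
    · simp
  have hv_od : ∀ (i : Fin N) (m : Fin (2 * K)) (κ : Fin K),
      (∑ m', M i m m' * (if (m' : ℕ) = 2 * (κ : ℕ) + 1 then (1 : ℂ) else 0)) = M i m (od κ) := by
    intro i m κ
    rw [Finset.sum_eq_single (od κ)]
    · simp [od]
    · intro m' _ hm'
      have h : ¬ (m' : ℕ) = 2 * (κ : ℕ) + 1 := by simpa [Fin.ext_iff, od] using hm'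
      simp [h]
    · simp
  have hEe : ∀ (i : Fin N) (κ : Fin K),
      (∑ m, isoEntry K (g i, b i) m * M i m (ev κ))
        = (if g i = ev κ then 1 else 0) *
          (if i = i0
            then aC N α * (if b i = 0 then 1 else 0) + cC N α * (if b i = 1 then 1 else 0)
            else (if b i = 0 then 1 else 0)) := by
    intro i κ
    by_cases hi : i = i0
    · have hMi : M i = Atilde10 N K α := by rw [hM]; simp [hi]
      rw [hMi, if_pos hi]
      simp only [Atilde_ev N K α]
      calc (∑ m, isoEntry K (g i, b i) m *
              (aC N α * (if m = ev κ then 1 else 0) + cC N α * (if m = od κ then 1 else 0)))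
          = (aC N α * ∑ m, isoEntry K (g i, b i) m * (if m = ev κ then 1 else 0))
            + (cC N α * ∑ m, isoEntry K (g i, b i) m * (if m = od κ then 1 else 0)) := by
            rw [Finset.mul_sum, Finset.mul_sum, ← Finset.sum_add_distrib]
            exact Finset.sum_congr rfl fun m _ => by ring
        _ = aC N α * isoEntry K (g i, b i) (ev κ) + cC N α * isoEntry K (g i, b i) (od κ) := by
            rw [hsum_ind, hsum_ind]
        _ = _ := by rw [iso_ev, iso_od]; ring
    · have hMi : M i = 1 := by rw [hM]; simp [hi]
      rw [hMi, if_neg hi]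
      have h1 : ∀ m : Fin (2 * K),
          (1 : Matrix (Fin (2 * K)) (Fin (2 * K)) ℂ) m (ev κ) = if m = ev κ then 1 else 0 :=
        fun m => Matrix.one_apply
      simp only [h1]
      rw [hsum_ind, iso_ev]
  have hEo : ∀ (i : Fin N) (κ : Fin K),
      (∑ m, isoEntry K (g i, b i) m * M i m (od κ))
        = (if g i = ev κ then 1 else 0) *
          (if i = i0
            then cC N α * (if b i = 0 then 1 else 0) + (- aC N α) * (if b i = 1 then 1 else 0)
            else (if b i = 1 then 1 else 0)) := by
    intro i κ
    by_cases hi : i = i0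
    · have hMi : M i = Atilde10 N K α := by rw [hM]; simp [hi]
      rw [hMi, if_pos hi]
      simp only [Atilde_od N K α]
      calc (∑ m, isoEntry K (g i, b i) m *
              (cC N α * (if m = ev κ then 1 else 0) + (- aC N α) * (if m = od κ then 1 else 0)))
          = (cC N α * ∑ m, isoEntry K (g i, b i) m * (if m = ev κ then 1 else 0))
            + ((- aC N α) * ∑ m, isoEntry K (g i, b i) m * (if m = od κ then 1 else 0)) := by
            rw [Finset.mul_sum, Finset.mul_sum, ← Finset.sum_add_distrib]
            exact Finset.sum_congr rfl fun m _ => by ring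
        _ = cC N α * isoEntry K (g i, b i) (ev κ) + (- aC N α) * isoEntry K (g i, b i) (od κ) := by
            rw [hsum_ind, hsum_ind]
        _ = _ := by rw [iso_ev, iso_od]; ring
    · have hMi : M i = 1 := by rw [hM]; simp [hi]
      rw [hMi, if_neg hi]
      have h1 : ∀ m : Fin (2 * K),
          (1 : Matrix (Fin (2 * K)) (Fin (2 * K)) ℂ) m (od κ) = if m = od κ then 1 else 0 :=
        fun m => Matrix.one_apply
      simp only [h1]
      rw [hsum_ind, iso_od]
  have hprodsplit : ∀ E : Fin N → ℂ,
      (∏ i, E i) = E i0 * ∏ i ∈ Finset.univ.erase i0, E i :=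
    fun E => (Finset.mul_prod_erase Finset.univ E (Finset.mem_univ i0)).symm
  have hswap : ∀ (F : (Fin N → Fin (2 * K)) → ℂ)
      (G : (Fin N → Fin (2 * K)) → (Fin N → Fin K) → ℂ),
      (∑ f : Fin N → Fin (2 * K), F f * ∑ k : Fin N → Fin K, G f k)
        = ∑ k : Fin N → Fin K, ∑ f : Fin N → Fin (2 * K), F f * G f k := by
    intro F G
    simp only [Finset.mul_sum]
    exact Finset.sum_comm
  have hRHS : junk N K q g *
      ((tensorN N (fun i => if i = i0 then Astar10 N α else 1)).mulVec (ghz N)) b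
      = (∑ k : Fin N → Fin K, ((Real.sqrt (q k) : ℝ) : ℂ) *
            ∏ i, (if g i = ev (k i) then (1 : ℂ) else 0)) *
        (s2 * ((if b i0 = 0 then aC N α else cC N α) *
                (∏ i ∈ Finset.univ.erase i0, if b i = 0 then (1 : ℂ) else 0)
             + (if b i0 = 0 then cC N α else - aC N α) *
                (∏ i ∈ Finset.univ.erase i0, if b i = 1 then (1 : ℂ) else 0))) := by
    congr 1
    · unfold junk
      exact Finset.sum_congr rfl fun k _ => by simp only [ind_ev]
    · simp only [Matrix.mulVec, dotProduct, tensorN, Matrix.of_apply]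
      simp only [ghz_eq N (by omega : 1 ≤ N)]
      calc (∑ b' : Fin N → Fin 2,
              (∏ i, (if i = i0 then Astar10 N α else 1) (b i) (b' i)) *
              (((Real.sqrt 2 : ℝ) : ℂ)⁻¹ *
                ((if b' = (fun _ => 0) then 1 else 0) + (if b' = (fun _ => 1) then 1 else 0))))
          = s2 * ((∑ b' : Fin N → Fin 2,
                (∏ i, (if i = i0 then Astar10 N α else 1) (b i) (b' i)) *
                  (if b' = (fun _ => 0) then 1 else 0))
              + (∑ b' : Fin N → Fin 2,
                (∏ i, (if i = i0 then Astar10 N α else 1) (b i) (b' i)) *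
                  (if b' = (fun _ => 1) then 1 else 0))) := by
            rw [hs2]
            conv_rhs => rw [← Finset.sum_add_distrib, Finset.mul_sum]
            exact Finset.sum_congr rfl fun b' _ => by ring
        _ = s2 * ((∏ i, (if i = i0 then Astar10 N α else 1) (b i) 0)
              + (∏ i, (if i = i0 then Astar10 N α else 1) (b i) 1)) := by
            congr 1
            congr 1 <;> simp
        _ = _ := by
            rw [hprodsplit (fun i => (if i = i0 then Astar10 N α else 1) (b i) 0),
              hprodsplit (fun i => (if i = i0 then Astar10 N α else 1) (b i) 1)]
            have h0 : (∏ i ∈ Finset.univ.erase i0,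
                (if i = i0 then Astar10 N α else 1) (b i) 0)
                = ∏ i ∈ Finset.univ.erase i0, (if b i = 0 then (1 : ℂ) else 0) :=
              Finset.prod_congr rfl fun i hi => by
                rw [if_neg (Finset.ne_of_mem_erase hi)]; exact Matrix.one_apply
            have h1 : (∏ i ∈ Finset.univ.erase i0,
                (if i = i0 then Astar10 N α else 1) (b i) 1)
                = ∏ i ∈ Finset.univ.erase i0, (if b i = 1 then (1 : ℂ) else 0) :=
              Finset.prod_congr rfl fun i hi => by
                rw [if_neg (Finset.ne_of_mem_erase hi)]; exact Matrix.one_apply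
            beta_reduce
            rw [h0, h1, if_pos rfl, Astar_apply, Astar_apply]
            simp
  calc (∑ f : Fin N → Fin (2 * K),
          (∏ i, isoEntry K (g i, b i) (f i)) * ((tensorBig N K M).mulVec (Gtilde N K q)) f)
      = ∑ f : Fin N → Fin (2 * K), (∏ i, isoEntry K (g i, b i) (f i)) *
          ∑ k : Fin N → Fin K, ((Real.sqrt (q k) : ℝ) : ℂ) * ((Real.sqrt 2 : ℝ) : ℂ)⁻¹ *
            ((∑ f' : Fin N → Fin (2 * K), (∏ i, M i (f i) (f' i)) *
                ∏ i, (if (f' i : ℕ) = 2 * (k i : ℕ) then (1 : ℂ) else 0))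
              + (∑ f' : Fin N → Fin (2 * K), (∏ i, M i (f i) (f' i)) *
                ∏ i, (if (f' i : ℕ) = 2 * (k i : ℕ) + 1 then (1 : ℂ) else 0))) := by
        refine Finset.sum_congr rfl fun f _ => ?_
        congr 1
        simp only [Matrix.mulVec, dotProduct, tensorBig, Matrix.of_apply, Gtilde]
        rw [hswap]
        refine Finset.sum_congr rfl fun k _ => ?_
        conv_rhs => rw [← Finset.sum_add_distrib, Finset.mul_sum]
        exact Finset.sum_congr rfl fun f' _ => by ring
    _ = ∑ k : Fin N → Fin K, ((Real.sqrt (q k) : ℝ) : ℂ) * ((Real.sqrt 2 : ℝ) : ℂ)⁻¹ *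
          ((∑ f : Fin N → Fin (2 * K), (∏ i, isoEntry K (g i, b i) (f i)) *
              ∑ f' : Fin N → Fin (2 * K), (∏ i, M i (f i) (f' i)) *
                ∏ i, (if (f' i : ℕ) = 2 * (k i : ℕ) then (1 : ℂ) else 0))
            + (∑ f : Fin N → Fin (2 * K), (∏ i, isoEntry K (g i, b i) (f i)) *
              ∑ f' : Fin N → Fin (2 * K), (∏ i, M i (f i) (f' i)) *
                ∏ i, (if (f' i : ℕ) = 2 * (k i : ℕ) + 1 then (1 : ℂ) else 0))) := by
        rw [hswap]
        refine Finset.sum_congr rfl fun k _ => ?_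
        conv_rhs => rw [← Finset.sum_add_distrib, Finset.mul_sum]
        exact Finset.sum_congr rfl fun f _ => by ring
    _ = ∑ k : Fin N → Fin K, ((Real.sqrt (q k) : ℝ) : ℂ) * ((Real.sqrt 2 : ℝ) : ℂ)⁻¹ *
          ((∏ i, (if g i = ev (k i) then (1 : ℂ) else 0) *
              (if i = i0
                then aC N α * (if b i = 0 then 1 else 0) + cC N α * (if b i = 1 then 1 else 0)
                else (if b i = 0 then 1 else 0)))
            + (∏ i, (if g i = ev (k i) then (1 : ℂ) else 0) *
              (if i = i0
                then cC N α * (if b i = 0 then 1 else 0) + (- aC N α) * (if b i = 1 then 1 else 0)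
                else (if b i = 1 then 1 else 0)))) := by
        refine Finset.sum_congr rfl fun k _ => ?_
        rw [key (fun i m' => if (m' : ℕ) = 2 * (k i : ℕ) then (1 : ℂ) else 0),
          key (fun i m' => if (m' : ℕ) = 2 * (k i : ℕ) + 1 then (1 : ℂ) else 0)]
        simp only [hv_ev, hv_od, hEe, hEo]
    _ = (∑ k : Fin N → Fin K, ((Real.sqrt (q k) : ℝ) : ℂ) *
            ∏ i, (if g i = ev (k i) then (1 : ℂ) else 0)) *
        (s2 * ((if b i0 = 0 then aC N α else cC N α) *
                (∏ i ∈ Finset.univ.erase i0, if b i = 0 then (1 : ℂ) else 0)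
             + (if b i0 = 0 then cC N α else - aC N α) *
                (∏ i ∈ Finset.univ.erase i0, if b i = 1 then (1 : ℂ) else 0))) := by
        rw [Finset.sum_mul]
        refine Finset.sum_congr rfl fun k _ => ?_
        rw [hprodsplit (fun i => (if g i = ev (k i) then (1 : ℂ) else 0) *
              (if i = i0
                then aC N α * (if b i = 0 then 1 else 0) + cC N α * (if b i = 1 then 1 else 0)
                else (if b i = 0 then 1 else 0))),
          hprodsplit (fun i => (if g i = ev (k i) then (1 : ℂ) else 0) *
              (if i = i0
                then cC N α * (if b i = 0 then 1 else 0) + (- aC N α) * (if b i = 1 then 1 else 0)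
                else (if b i = 1 then 1 else 0))),
          hprodsplit (fun i => (if g i = ev (k i) then (1 : ℂ) else 0))]
        beta_reduce
        have e0 : (∏ i ∈ Finset.univ.erase i0,
            ((if g i = ev (k i) then (1 : ℂ) else 0) *
              (if i = i0
                then aC N α * (if b i = 0 then 1 else 0) + cC N α * (if b i = 1 then 1 else 0)
                else (if b i = 0 then 1 else 0))))
            = (∏ i ∈ Finset.univ.erase i0, (if g i = ev (k i) then (1 : ℂ) else 0)) *
              (∏ i ∈ Finset.univ.erase i0, (if b i = 0 then (1 : ℂ) else 0)) := by
          rw [← Finset.prod_mul_distrib]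
          exact Finset.prod_congr rfl fun i hi => by
            rw [if_neg (Finset.ne_of_mem_erase hi)]
        have e1 : (∏ i ∈ Finset.univ.erase i0,
            ((if g i = ev (k i) then (1 : ℂ) else 0) *
              (if i = i0
                then cC N α * (if b i = 0 then 1 else 0) + (- aC N α) * (if b i = 1 then 1 else 0)
                else (if b i = 1 then 1 else 0))))
            = (∏ i ∈ Finset.univ.erase i0, (if g i = ev (k i) then (1 : ℂ) else 0)) *
              (∏ i ∈ Finset.univ.erase i0, (if b i = 1 then (1 : ℂ) else 0)) := by
          rw [← Finset.prod_mul_distrib]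
          exact Finset.prod_congr rfl fun i hi => by
            rw [if_neg (Finset.ne_of_mem_erase hi)]
        rw [e0, e1, if_pos rfl, if_pos rfl, hs2]
        rcases fin_two_cases (b i0) with hb | hb <;> rw [hb] <;>
          simp only [if_pos rfl, if_neg (show (0 : Fin 2) ≠ 1 by decide),
            if_neg (show (1 : Fin 2) ≠ 0 by decide), if_true, if_false, eq_self_iff_true] <;>
          ring
    _ = _ := hRHS.symm

/-- Self-testing of the observable `A₁₀` (Appendix B): the local isometries map
`(Ã₁₀⊗Id⊗⋯⊗Id)|G̃⟩` to `|junk⟩ ⊗ ((A*₁₀⊗I₂⊗⋯⊗I₂)|GHZ_N⟩)`. -/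
theorem self_test_A10 (N K : ℕ) (hN : 2 ≤ N) (hK : 1 ≤ K) (α : ℝ) (hα : 0 < α)
    (q : (Fin N → Fin K) → ℝ) (hq : ∀ k, 0 ≤ q k) (hsum : ∑ k, q k = 1) :
    ∀ (g : Fin N → Fin (2 * K)) (b : Fin N → Fin 2),
      (∑ f : Fin N → Fin (2 * K),
          (∏ i, isoEntry K (g i, b i) (f i)) *
            ((tensorBig N K (fun i => if i = (⟨0, by omega⟩ : Fin N)
                then Atilde10 N K α else 1)).mulVec (Gtilde N K q)) f)
        = junk N K q g *
            ((tensorN N (fun i => if i = (⟨0, by omega⟩ : Fin N)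
                then Astar10 N α else 1)).mulVec (ghz N)) b := by
  intro g b
  exact main_lemma N K hN α q ⟨0, by omega⟩ g b
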